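/- Let λ > 0 and 1 ≤ k < l ≤ n with N(k,l) ≤ λ. Then O(k,l) ≤ λ if and only if Δ(x) ≥ |C[k,l]| − 2λ for every x ∈ K'. -/
import Mathlib


noncomputable section

variable {X : Type*} [MetricSpace X]

/-- Path distance between vertices `i` and `j` of the path `p₁, …, pₙ`:
the sum of the edge weights `d(p_t, p_{t+1})` for `min i j ≤ t < max i j`. -/
def pathDist (p : ℕ → X) (i j : ℕ) : ℝ :=
  ∑ t ∈ Finset.Ico (min i j) (max i j), dist (p t) (p (t + 1))

/-- Shortest-path distance between vertices `x` and `y` in the unicyclic graph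
`P̄[k,l]` obtained by adding the shortcut `(p_k, p_l)` of weight `d(p_k, p_l)`. -/
def pbar (p : ℕ → X) (k l x y : ℕ) : ℝ :=
  min (pathDist p x y)
    (min (pathDist p x k + dist (p k) (p l) + pathDist p l y)
         (pathDist p x l + dist (p k) (p l) + pathDist p k y))

/-- The length `|C[k,l]|` of the cycle `C[k,l]`. -/
def cycleLen (p : ℕ → X) (k l : ℕ) : ℝ :=
  pathDist p k l + dist (p k) (p l)

/-- The cycle distance `c_{k,l}(x,y)` for `k ≤ x, y ≤ l`. -/
def cycDist (p : ℕ → X) (k l x y : ℕ) : ℝ :=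
  min (pathDist p x y) (cycleLen p k l - pathDist p x y)

/-- `S(k,l) = max_{k ≤ x ≤ l} p̄_{k,l}(1,x)`. -/
def Sfun (p : ℕ → X) (k l : ℕ) : ℝ :=
  sSup ((fun x => pbar p k l 1 x) '' Set.Icc k l)

/-- `E(k,l) = max_{k ≤ x ≤ l} p̄_{k,l}(x,n)`. -/
def Efun (p : ℕ → X) (n k l : ℕ) : ℝ :=
  sSup ((fun x => pbar p k l x n) '' Set.Icc k l)

/-- `U(k,l) = p̄_{k,l}(1,n)`. -/
def Ufun (p : ℕ → X) (n k l : ℕ) : ℝ :=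
  pbar p k l 1 n

/-- `O(k,l) = max_{k ≤ x < y ≤ l} c_{k,l}(x,y)`. -/
def Ofun (p : ℕ → X) (k l : ℕ) : ℝ :=
  sSup {r | ∃ x y : ℕ, k ≤ x ∧ x < y ∧ y ≤ l ∧ r = cycDist p k l x y}

/-- `N(k,l) = max (S(k,l), E(k,l), U(k,l))`. -/
def Nfun (p : ℕ → X) (n k l : ℕ) : ℝ :=
  max (Sfun p k l) (max (Efun p n k l) (Ufun p n k l))

/-- `M(k,l) = max_{1 ≤ x < y ≤ n} p̄_{k,l}(x,y)`, the diameter of `P̄[k,l]`. -/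
def Mfun (p : ℕ → X) (n k l : ℕ) : ℝ :=
  sSup {r | ∃ x y : ℕ, 1 ≤ x ∧ x < y ∧ y ≤ n ∧ r = pbar p k l x y}

lemma pathDist_nonneg (p : ℕ → X) (i j : ℕ) : 0 ≤ pathDist p i j :=
  Finset.sum_nonneg fun _ _ => dist_nonneg

lemma pathDist_comm (p : ℕ → X) (i j : ℕ) : pathDist p i j = pathDist p j i := by
  unfold pathDist; rw [min_comm, max_comm]

lemma pathDist_self (p : ℕ → X) (i : ℕ) : pathDist p i i = 0 := by
  simp [pathDist]

lemma pathDist_add (p : ℕ → X) {i j m : ℕ} (h1 : i ≤ j) (h2 : j ≤ m) :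
    pathDist p i m = pathDist p i j + pathDist p j m := by
  unfold pathDist
  rw [min_eq_left (h1.trans h2), max_eq_right (h1.trans h2), min_eq_left h1, max_eq_right h1,
    min_eq_left h2, max_eq_right h2, ← Finset.sum_Ico_consecutive _ h1 h2]

lemma pathDist_mono_right (p : ℕ → X) {i j m : ℕ} (h1 : i ≤ j) (h2 : j ≤ m) :
    pathDist p i j ≤ pathDist p i m := by
  rw [pathDist_add p h1 h2]; linarith [pathDist_nonneg p j m]

lemma Oset_bddAbove (p : ℕ → X) (k l : ℕ) :
    BddAbove {r | ∃ x y : ℕ, k ≤ x ∧ x < y ∧ y ≤ l ∧ r = cycDist p k l x y} := by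
  have hsub : {r | ∃ x y : ℕ, k ≤ x ∧ x < y ∧ y ≤ l ∧ r = cycDist p k l x y}
      ⊆ (fun q : ℕ × ℕ => cycDist p k l q.1 q.2) '' (Set.Icc k l ×ˢ Set.Icc k l) := by
    rintro r ⟨x, y, hx, hxy, hy, rfl⟩
    exact ⟨(x, y), ⟨⟨hx, le_of_lt (hxy.trans_le hy)⟩, ⟨hx.trans hxy.le, hy⟩⟩, rfl⟩
  exact (Set.Finite.bddAbove (((Set.finite_Icc k l).prod (Set.finite_Icc k l)).image _)).mono hsub

lemma S_bound (p : ℕ → X) (n k l : ℕ) (hk : 1 ≤ k) (lam : ℝ)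
    (hN : Nfun p n k l ≤ lam) {x : ℕ} (hkx : k ≤ x) (hxl : x ≤ l) :
    min (pathDist p k x) (dist (p k) (p l) + pathDist p x l) ≤ lam := by
  have hS : Sfun p k l ≤ lam := le_trans (le_max_left _ _) hN
  have hmem : pbar p k l 1 x ∈ (fun x => pbar p k l 1 x) '' Set.Icc k l :=
    ⟨x, ⟨hkx, hxl⟩, rfl⟩
  have hbdd : BddAbove ((fun x => pbar p k l 1 x) '' Set.Icc k l) :=
    Set.Finite.bddAbove ((Set.finite_Icc k l).image _)
  have hpb : pbar p k l 1 x ≤ lam := le_trans (le_csSup hbdd hmem) hS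
  refine le_trans ?_ hpb
  unfold pbar
  have h1x : (1:ℕ) ≤ x := hk.trans hkx
  have e1 : pathDist p 1 x = pathDist p 1 k + pathDist p k x := pathDist_add p hk hkx
  have e2 : pathDist p l x = pathDist p x l := pathDist_comm p l x
  have n1 := pathDist_nonneg p 1 k
  have n2 := pathDist_nonneg p 1 l
  have n3 := dist_nonneg (x := p k) (y := p l)
  refine le_min ?_ (le_min ?_ ?_)
  · exact le_trans (min_le_left _ _) (by linarith)
  · refine le_trans (min_le_right _ _) ?_
    rw [e2]; linarith
  · exact le_trans (min_le_left _ _) (by linarith)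

/-- Let `λ > 0` and `1 ≤ k < l ≤ n` with `N(k,l) ≤ λ`. Then
`O(k,l) ≤ λ` if and only if `Δ(x) ≥ |C[k,l]| − 2λ` for every `x ∈ K' = K \ L`,
where `Δ(x) = δ_P(x,x') − λ` and `x'` is the smallest index with `x < x' ≤ l`
and `δ_P(x,x') > λ`. -/
theorem O_le_iff_defects_large {X : Type*} [MetricSpace X]
    (n : ℕ) (hn : 2 ≤ n) (p : ℕ → X)
    (k l : ℕ) (hk : 1 ≤ k) (hkl : k < l) (hl : l ≤ n)
    (lam : ℝ) (hlam : 0 < lam) (hN : Nfun p n k l ≤ lam) :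
    Ofun p k l ≤ lam ↔
      ∀ x ∈ {z : ℕ | k ≤ z ∧ z ≤ l ∧ pathDist p k z ≤ lam} \
            {z : ℕ | k ≤ z ∧ z ≤ l ∧ pathDist p z l ≤ lam},
        cycleLen p k l - 2 * lam ≤
          pathDist p x (sInf {v : ℕ | x < v ∧ v ≤ l ∧ lam < pathDist p x v}) - lam := by
  constructor
  · -- forward
    intro hO x hx
    obtain ⟨⟨hkx, hxl, hKx⟩, hxL⟩ := hx
    simp only [Set.mem_setOf_eq, not_and, not_le] at hxL
    have hxlgt : lam < pathDist p x l := hxL hkx hxl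
    have hxltl : x < l := by
      rcases lt_or_eq_of_le hxl with h | h
      · exact h
      · exfalso; rw [h, pathDist_self] at hxlgt; linarith
    have hlmem : l ∈ {v : ℕ | x < v ∧ v ≤ l ∧ lam < pathDist p x v} :=
      ⟨hxltl, le_refl l, hxlgt⟩
    have hx'mem := Nat.sInf_mem (⟨l, hlmem⟩ :
        Set.Nonempty {v : ℕ | x < v ∧ v ≤ l ∧ lam < pathDist p x v})
    set x' := sInf {v : ℕ | x < v ∧ v ≤ l ∧ lam < pathDist p x v} with hx'
    obtain ⟨hxx', hx'l, hgt⟩ := hx'mem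
    have hmem : cycDist p k l x x' ∈
        {r | ∃ a b : ℕ, k ≤ a ∧ a < b ∧ b ≤ l ∧ r = cycDist p k l a b} :=
      ⟨x, x', hkx, hxx', hx'l, rfl⟩
    have hle : cycDist p k l x x' ≤ lam :=
      le_trans (le_csSup (Oset_bddAbove p k l) hmem) hO
    unfold cycDist at hle
    rcases min_le_iff.mp hle with h | h
    · linarith
    · linarith
  · -- backward
    intro hΔ
    refine Real.sSup_le ?_ hlam.le
    rintro r ⟨x, y, hkx, hxy, hyl, rfl⟩
    by_contra hc
    push_neg at hc
    rw [cycDist, lt_min_iff] at hc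
    obtain ⟨h1, h2⟩ := hc
    have hxl : x ≤ l := le_of_lt (hxy.trans_le hyl)
    have hxly : pathDist p x l = pathDist p x y + pathDist p y l :=
      pathDist_add p hxy.le hyl
    have hylnn := pathDist_nonneg p y l
    have hdn := dist_nonneg (x := p k) (y := p l)
    have hSx := S_bound p n k l hk lam hN hkx hxl
    have hkxle : pathDist p k x ≤ lam := by
      rcases min_le_iff.mp hSx with h | h
      · exact h
      · linarith
    have hxK' : x ∈ {z : ℕ | k ≤ z ∧ z ≤ l ∧ pathDist p k z ≤ lam} \
        {z : ℕ | k ≤ z ∧ z ≤ l ∧ pathDist p z l ≤ lam} := by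
      refine ⟨⟨hkx, hxl, hkxle⟩, ?_⟩
      simp only [Set.mem_setOf_eq, not_and, not_le]
      intro _ _
      linarith
    have hdef := hΔ x hxK'
    have hymem : y ∈ {v : ℕ | x < v ∧ v ≤ l ∧ lam < pathDist p x v} := ⟨hxy, hyl, h1⟩
    have hne : Set.Nonempty {v : ℕ | x < v ∧ v ≤ l ∧ lam < pathDist p x v} := ⟨y, hymem⟩
    have hx'mem := Nat.sInf_mem hne
    set x' := sInf {v : ℕ | x < v ∧ v ≤ l ∧ lam < pathDist p x v} with hx'
    have hx'y : x' ≤ y := Nat.sInf_le hymem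
    have hmono : pathDist p x x' ≤ pathDist p x y :=
      pathDist_mono_right p hx'mem.1.le hx'y
    linarith
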